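/- The product on the Deligne path complex makes it a strict differential graded algebra: (i) it maps P^r × P^s into P^{r+s}; (ii) it satisfies the Leibniz rule d(w · w̃) = (dw) · w̃ + (−1)^r w · (dw̃) for w ∈ P^r, w̃ ∈ P^s; (iii) it is associative whenever the product on V^• is associative; and (iv) it is graded-commutative, w · w̃ = (−1)^{rs} w̃ · w for w ∈ P^r, w̃ ∈ P^s, whenever the product on V^• is graded-commutative (uv = (−1)^{rs}vu for u ∈ V^r, v ∈ V^s). -/

import Mathlib

/-!
Setup: `(V, d)` is a cochain complex of `ℚ`-vector spaces indexed by `ℤ`, with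
subcomplexes `I, F ⊆ V`.  We model the graded pieces as submodules `V n, I n, F n`
of one ambient `ℚ`-vector space `A`, with one differential `d : A →ₗ[ℚ] A` that maps
`V n` into `V (n+1)` (and similarly for `I`, `F`).

Polynomials `ℚ[x] ⊗ V` with coefficients in `A` are modelled as finitely supported
functions `ℕ →₀ A`, where `p i` is the coefficient of `xⁱ`.
-/

variable {A : Type*} [AddCommGroup A] [Module ℚ A]

/-- Evaluation at `ε : ℚ` of a polynomial `∑ i, xⁱ ⊗ vᵢ`. -/
noncomputable def evalAt (ε : ℚ) : (ℕ →₀ A) →ₗ[ℚ] A :=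
  Finsupp.lsum ℚ fun i : ℕ => ε ^ i • (LinearMap.id : A →ₗ[ℚ] A)

/-- Formal derivative `∂ₓ` in the polynomial variable `x`. -/
noncomputable def polyDeriv : (ℕ →₀ A) →ₗ[ℚ] (ℕ →₀ A) :=
  Finsupp.lsum ℚ fun i : ℕ =>
    (Finsupp.lsingle (R := ℚ) (i - 1)).comp ((i : ℚ) • (LinearMap.id : A →ₗ[ℚ] A))

/-- Apply a linear map `d` to all coefficients (this is `d_V`). -/
noncomputable def coeffMap (d : A →ₗ[ℚ] A) : (ℕ →₀ A) →ₗ[ℚ] (ℕ →₀ A) :=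
  Finsupp.mapRange.linearMap d

/-- `∫₀¹ q := ∑ i, vᵢ / (i+1)`. -/
noncomputable def int01 : (ℕ →₀ A) →ₗ[ℚ] A :=
  Finsupp.lsum ℚ fun i : ℕ => ((i : ℚ) + 1)⁻¹ • (LinearMap.id : A →ₗ[ℚ] A)

/-- `∫₀ˣ q := ∑ i, x^(i+1)/(i+1) ⊗ vᵢ`. -/
noncomputable def int0x : (ℕ →₀ A) →ₗ[ℚ] (ℕ →₀ A) :=
  Finsupp.lsum ℚ fun i : ℕ =>
    (Finsupp.lsingle (R := ℚ) (i + 1)).comp (((i : ℚ) + 1)⁻¹ • (LinearMap.id : A →ₗ[ℚ] A))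

/-- Membership in degree `n` of the Deligne cone complex `Cⁿ = Iⁿ ⊕ Fⁿ ⊕ V^(n-1)`. -/
def MemC (I F V : ℤ → Submodule ℚ A) (n : ℤ) (x : A × A × A) : Prop :=
  x.1 ∈ I n ∧ x.2.1 ∈ F n ∧ x.2.2 ∈ V (n - 1)

/-- Membership in degree `n` of the Deligne path complex `Pⁿ`: a pair `(p, q)` with
`p ∈ ℚ[x] ⊗ Vⁿ`, `q ∈ ℚ[x] ⊗ V^(n-1)`, `p(0) ∈ Iⁿ` and `p(1) ∈ Fⁿ`. -/
def MemP (I F V : ℤ → Submodule ℚ A) (n : ℤ) (w : (ℕ →₀ A) × (ℕ →₀ A)) : Prop :=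
  (∀ i, w.1 i ∈ V n) ∧ (∀ i, w.2 i ∈ V (n - 1)) ∧
    evalAt 0 w.1 ∈ I n ∧ evalAt 1 w.1 ∈ F n

/-- Differential of the cone complex: `d (a, b, c) = (d a, d b, b - a - d c)`. -/
noncomputable def dCone (d : A →ₗ[ℚ] A) (x : A × A × A) : A × A × A :=
  (d x.1, d x.2.1, x.2.1 - x.1 - d x.2.2)

/-- Differential of the path complex: `d (p, q) = (d_V p, ∂ₓ p - d_V q)`. -/
noncomputable def dPath (d : A →ₗ[ℚ] A) (w : (ℕ →₀ A) × (ℕ →₀ A)) : (ℕ →₀ A) × (ℕ →₀ A) :=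
  (coeffMap d w.1, polyDeriv w.1 - coeffMap d w.2)

/-- The evaluation map `ev (p, q) = (p(0), p(1), ∫₀¹ q)`. -/
noncomputable def evMap : (ℕ →₀ A) × (ℕ →₀ A) → A × A × A :=
  fun w => (evalAt 0 w.1, evalAt 1 w.1, int01 w.2)

/-- The splitting `s (a, b, c) = ((1-x) ⊗ a + x ⊗ b, 1 ⊗ c)`. -/
noncomputable def sMap : A × A × A → (ℕ →₀ A) × (ℕ →₀ A) :=
  fun x => (Finsupp.single 0 x.1 + Finsupp.single 1 (x.2.1 - x.1), Finsupp.single 0 x.2.2)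

/-- Beilinson's product `∪_α` on the Deligne cone complex; `r` is the (cohomological)
degree of the first factor.  `μ` is the graded product of the underlying complex `V`. -/
noncomputable def cup (μ : A →ₗ[ℚ] A →ₗ[ℚ] A) (α : ℚ) (r : ℤ) (x y : A × A × A) :
    A × A × A :=
  (μ x.1 y.1, μ x.2.1 y.2.1,
    ((1 - α) * (-1 : ℚ) ^ r) • μ x.1 y.2.2 + (α * (-1 : ℚ) ^ r) • μ x.2.1 y.2.2 +
      α • μ x.2.2 y.1 + (1 - α) • μ x.2.2 y.2.1)

/-- Product of two coefficient polynomials (`ℚ[x] ⊗ V`-elements): polynomials in `x` are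
multiplied and the coefficients are multiplied using `μ`. -/
noncomputable def polyMul (μ : A →ₗ[ℚ] A →ₗ[ℚ] A) (p q : ℕ →₀ A) : ℕ →₀ A :=
  p.sum fun i a => q.sum fun j b => Finsupp.single (i + j) (μ a b)

/-- The product on the Deligne path complex, where the first factor has degree `r`:
`(p, q) · (p̃, q̃) = (p p̃, (-1)^r p q̃ + q p̃)`. -/
noncomputable def mulP (μ : A →ₗ[ℚ] A →ₗ[ℚ] A) (r : ℤ) (w w' : (ℕ →₀ A) × (ℕ →₀ A)) :
    (ℕ →₀ A) × (ℕ →₀ A) :=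
  (polyMul μ w.1 w'.1, ((-1 : ℚ) ^ r) • polyMul μ w.1 w'.2 + polyMul μ w.2 w'.1)

variable (μ : A →ₗ[ℚ] A →ₗ[ℚ] A)

lemma evalAt_single (ε : ℚ) (k : ℕ) (a : A) : evalAt ε (Finsupp.single k a) = ε ^ k • a := by
  simp [evalAt]

lemma polyDeriv_single (k : ℕ) (a : A) :
    polyDeriv (Finsupp.single k a) = Finsupp.single (k - 1) ((k : ℚ) • a) := by
  simp [polyDeriv]

lemma coeffMap_single (d : A →ₗ[ℚ] A) (k : ℕ) (a : A) :
    coeffMap d (Finsupp.single k a) = Finsupp.single k (d a) := by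
  simp [coeffMap]

lemma polyMul_zero_left (q : ℕ →₀ A) : polyMul μ 0 q = 0 := by
  simp [polyMul]

lemma polyMul_zero_right (p : ℕ →₀ A) : polyMul μ p 0 = 0 := by
  simp [polyMul]

lemma polyMul_single_single (i j : ℕ) (a b : A) :
    polyMul μ (Finsupp.single i a) (Finsupp.single j b) = Finsupp.single (i + j) (μ a b) := by
  unfold polyMul
  rw [Finsupp.sum_single_index, Finsupp.sum_single_index] <;> simp [Finsupp.sum_single_index]

lemma polyMul_add_left (p p' q : ℕ →₀ A) :
    polyMul μ (p + p') q = polyMul μ p q + polyMul μ p' q := by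
  unfold polyMul
  refine Finsupp.sum_add_index' (fun i => ?_) (fun i a a' => ?_)
  · simp
  · simp only [map_add, LinearMap.add_apply, Finsupp.single_add, Finsupp.sum_add]

lemma polyMul_add_right (p q q' : ℕ →₀ A) :
    polyMul μ p (q + q') = polyMul μ p q + polyMul μ p q' := by
  unfold polyMul
  rw [← Finsupp.sum_add]
  refine Finset.sum_congr rfl fun i _ => ?_
  refine Finsupp.sum_add_index' (fun j => ?_) (fun j b b' => ?_) <;> simp [Finsupp.single_add]

lemma polyMul_smul_left (c : ℚ) (p q : ℕ →₀ A) :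
    polyMul μ (c • p) q = c • polyMul μ p q := by
  unfold polyMul
  rw [Finsupp.sum_smul_index' (fun i => by simp), Finsupp.smul_sum]
  congr 1; ext i a
  rw [Finsupp.smul_sum]
  congr 1; ext j b
  simp [Finsupp.smul_single]

lemma polyMul_smul_right (c : ℚ) (p q : ℕ →₀ A) :
    polyMul μ p (c • q) = c • polyMul μ p q := by
  unfold polyMul
  rw [Finsupp.smul_sum]
  congr 1; ext i a
  rw [Finsupp.sum_smul_index' (fun j => by simp), Finsupp.smul_sum]
  congr 1; ext j b
  simp [Finsupp.smul_single]

lemma polyMul_sub_left (p p' q : ℕ →₀ A) :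
    polyMul μ (p - p') q = polyMul μ p q - polyMul μ p' q := by
  have := polyMul_add_left μ (p - p') p' q
  simp only [sub_add_cancel] at this
  exact eq_sub_of_add_eq this.symm

lemma polyMul_sub_right (p q q' : ℕ →₀ A) :
    polyMul μ p (q - q') = polyMul μ p q - polyMul μ p q' := by
  have := polyMul_add_right μ p (q - q') q'
  simp only [sub_add_cancel] at this
  exact eq_sub_of_add_eq this.symm

lemma evalAt_polyMul (ε : ℚ) (p q : ℕ →₀ A) :
    evalAt ε (polyMul μ p q) = μ (evalAt ε p) (evalAt ε q) := by
  induction p using Finsupp.induction_linear with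
  | zero => simp [polyMul_zero_left]
  | add f g hf hg => simp [polyMul_add_left, hf, hg, map_add]
  | single i a =>
    induction q using Finsupp.induction_linear with
    | zero => simp [polyMul_zero_right]
    | add f g hf hg => simp [polyMul_add_right, hf, hg, map_add]
    | single j b =>
      rw [polyMul_single_single]
      simp [evalAt_single, pow_add, mul_smul, smul_comm (ε ^ j)]

lemma polyDeriv_polyMul (p q : ℕ →₀ A) :
    polyDeriv (polyMul μ p q) = polyMul μ (polyDeriv p) q + polyMul μ p (polyDeriv q) := by
  induction p using Finsupp.induction_linear with
  | zero => simp [polyMul_zero_left]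
  | add f g hf hg =>
    simp only [polyMul_add_left, map_add, hf, hg]; abel
  | single i a =>
    induction q using Finsupp.induction_linear with
    | zero => simp [polyMul_zero_right]
    | add f g hf hg =>
      simp only [polyMul_add_right, map_add, hf, hg]; abel
    | single j b =>
      rw [polyMul_single_single, polyDeriv_single, polyDeriv_single, polyDeriv_single,
        polyMul_single_single, polyMul_single_single]
      simp only [map_smul, LinearMap.smul_apply, Finsupp.smul_single]
      rcases Nat.eq_zero_or_pos i with hi | hi
      · subst hi; simp
      rcases Nat.eq_zero_or_pos j with hj | hj
      · subst hj; simp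
      have h1 : i - 1 + j = i + j - 1 := by omega
      have h2 : i + (j - 1) = i + j - 1 := by omega
      rw [h1, h2, ← Finsupp.single_add]
      congr 1
      push_cast
      rw [add_smul]

lemma polyMul_assoc (hassoc : ∀ a b c : A, μ (μ a b) c = μ a (μ b c)) (p q r : ℕ →₀ A) :
    polyMul μ (polyMul μ p q) r = polyMul μ p (polyMul μ q r) := by
  induction p using Finsupp.induction_linear with
  | zero => simp [polyMul_zero_left]
  | add f g hf hg => simp [polyMul_add_left, hf, hg]
  | single i a =>
    induction q using Finsupp.induction_linear with
    | zero => simp [polyMul_zero_left, polyMul_zero_right]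
    | add f g hf hg => simp [polyMul_add_left, polyMul_add_right, hf, hg]
    | single j b =>
      induction r using Finsupp.induction_linear with
      | zero => simp [polyMul_zero_right]
      | add f g hf hg => simp [polyMul_add_right, hf, hg]
      | single k c =>
        simp only [polyMul_single_single, hassoc, add_assoc]

lemma polyMul_apply_mem (W : Submodule ℚ A) (p q : ℕ →₀ A)
    (h : ∀ i j, μ (p i) (q j) ∈ W) (k : ℕ) : polyMul μ p q k ∈ W := by
  unfold polyMul
  rw [Finsupp.sum_apply]
  refine Submodule.sum_mem _ fun i _ => ?_
  dsimp only
  rw [Finsupp.sum_apply]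
  refine Submodule.sum_mem _ fun j _ => ?_
  dsimp only
  rw [Finsupp.single_apply]
  split
  · exact h i j
  · exact W.zero_mem

lemma coeffMap_apply' (d : A →ₗ[ℚ] A) (p : ℕ →₀ A) :
    coeffMap d p = Finsupp.mapRange d (map_zero d) p := rfl

lemma coeffMap_polyMul (d : A →ₗ[ℚ] A) (r : ℤ) (W : Submodule ℚ A)
    (hLeib : ∀ u ∈ W, ∀ v : A, d (μ u v) = μ (d u) v + ((-1 : ℚ) ^ r) • μ u (d v))
    (p q : ℕ →₀ A) (hp : ∀ i, p i ∈ W) :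
    coeffMap d (polyMul μ p q) =
      polyMul μ (coeffMap d p) q + ((-1 : ℚ) ^ r) • polyMul μ p (coeffMap d q) := by
  unfold polyMul
  rw [map_finsuppSum, coeffMap_apply' d p,
    Finsupp.sum_mapRange_index (by simp), Finsupp.smul_sum, ← Finsupp.sum_add]
  refine Finset.sum_congr rfl fun i _ => ?_
  dsimp only
  rw [map_finsuppSum, coeffMap_apply' d q,
    Finsupp.sum_mapRange_index (by simp), Finsupp.smul_sum, ← Finsupp.sum_add]
  refine Finset.sum_congr rfl fun j _ => ?_
  dsimp only
  rw [coeffMap_single, hLeib (p i) (hp i) (q j), Finsupp.single_add, Finsupp.smul_single]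

lemma polyMul_comm (c : ℚ) (Vr Vs : Submodule ℚ A)
    (hcomm : ∀ u ∈ Vr, ∀ v ∈ Vs, μ u v = c • μ v u)
    (p q : ℕ →₀ A) (hp : ∀ i, p i ∈ Vr) (hq : ∀ j, q j ∈ Vs) :
    polyMul μ p q = c • polyMul μ q p := by
  unfold polyMul
  conv_rhs => rw [Finsupp.sum_comm q p]
  rw [Finsupp.smul_sum]
  refine Finset.sum_congr rfl fun i _ => ?_
  dsimp only
  rw [Finsupp.smul_sum]
  refine Finset.sum_congr rfl fun j _ => ?_
  dsimp only
  rw [hcomm (p i) (hp i) (q j) (hq j), Finsupp.smul_single, add_comm i j]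

/-- The product makes the Deligne path complex into a strict
differential graded algebra: (i) it maps `P^r × P^s` into `P^(r+s)`; (ii) it satisfies
the Leibniz rule; (iii) it is associative whenever the product on `V` is associative;
(iv) it is graded-commutative whenever the product on `V` is graded-commutative. -/
theorem mulP_strict_dga
    (V I F : ℤ → Submodule ℚ A) (d : A →ₗ[ℚ] A) (μ : A →ₗ[ℚ] A →ₗ[ℚ] A)
    (hd2 : ∀ a : A, d (d a) = 0)
    (hIV : ∀ n, I n ≤ V n) (hFV : ∀ n, F n ≤ V n)
    (hdV : ∀ n, ∀ a ∈ V n, d a ∈ V (n + 1))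
    (hdI : ∀ n, ∀ a ∈ I n, d a ∈ I (n + 1))
    (hdF : ∀ n, ∀ a ∈ F n, d a ∈ F (n + 1))
    (hgrade : ∀ (r s : ℤ), ∀ a ∈ V r, ∀ b ∈ V s, μ a b ∈ V (r + s))
    (hgradeI : ∀ (r s : ℤ), ∀ a ∈ I r, ∀ b ∈ I s, μ a b ∈ I (r + s))
    (hgradeF : ∀ (r s : ℤ), ∀ a ∈ F r, ∀ b ∈ F s, μ a b ∈ F (r + s))
    (hLeib : ∀ (r : ℤ), ∀ u ∈ V r, ∀ v : A,
      d (μ u v) = μ (d u) v + ((-1 : ℚ) ^ r) • μ u (d v)) :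
    -- (i) the product maps `P^r × P^s` into `P^(r+s)`
    (∀ (r s : ℤ) (w w' : (ℕ →₀ A) × (ℕ →₀ A)),
      MemP I F V r w → MemP I F V s w' → MemP I F V (r + s) (mulP μ r w w')) ∧
    -- (ii) Leibniz rule
    (∀ (r s : ℤ) (w w' : (ℕ →₀ A) × (ℕ →₀ A)),
      MemP I F V r w → MemP I F V s w' →
      dPath d (mulP μ r w w') =
        mulP μ (r + 1) (dPath d w) w' + ((-1 : ℚ) ^ r) • mulP μ r w (dPath d w')) ∧
    -- (iii) associativity, assuming the product on `V` is associative
    ((∀ a b c : A, μ (μ a b) c = μ a (μ b c)) →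
      ∀ (r s t : ℤ) (w w' w'' : (ℕ →₀ A) × (ℕ →₀ A)),
        MemP I F V r w → MemP I F V s w' → MemP I F V t w'' →
        mulP μ (r + s) (mulP μ r w w') w'' = mulP μ r w (mulP μ s w' w'')) ∧
    -- (iv) graded-commutativity, assuming the product on `V` is graded-commutative
    ((∀ (r s : ℤ), ∀ u ∈ V r, ∀ v ∈ V s, μ u v = ((-1 : ℚ) ^ (r * s)) • μ v u) →
      ∀ (r s : ℤ) (w w' : (ℕ →₀ A) × (ℕ →₀ A)),
        MemP I F V r w → MemP I F V s w' →
        mulP μ r w w' = ((-1 : ℚ) ^ (r * s)) • mulP μ s w' w) := by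
  classical
  have hne : (-1 : ℚ) ≠ 0 := by norm_num
  have hpow_add : ∀ a b : ℤ, (-1 : ℚ) ^ (a + b) = (-1 : ℚ) ^ a * (-1 : ℚ) ^ b :=
    fun a b => zpow_add₀ hne a b
  have hsq : ∀ a : ℤ, (-1 : ℚ) ^ a * (-1 : ℚ) ^ a = 1 := by
    intro a
    rw [← hpow_add, show a + a = 2 * a by ring, zpow_mul]; norm_num
  have hsucc : ∀ a : ℤ, (-1 : ℚ) ^ (a + 1) = -(-1 : ℚ) ^ a := by
    intro a; rw [hpow_add]; norm_num
  have hpred : ∀ a : ℤ, (-1 : ℚ) ^ (a - 1) = -(-1 : ℚ) ^ a := by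
    intro a; rw [show a - 1 = a + (-1) by ring, hpow_add]; norm_num
  refine ⟨?_, ?_, ?_, ?_⟩
  · -- (i)
    rintro r s ⟨p, q⟩ ⟨p', q'⟩ ⟨hp, hq, hI, hF⟩ ⟨hp', hq', hI', hF'⟩
    refine ⟨fun k => ?_, fun k => ?_, ?_, ?_⟩
    · exact polyMul_apply_mem μ _ _ _ (fun i j => hgrade r s _ (hp i) _ (hp' j)) k
    · simp only [mulP, Finsupp.add_apply, Finsupp.smul_apply]
      have h1 : polyMul μ p q' k ∈ V (r + s - 1) := by
        have := polyMul_apply_mem μ (V (r + (s - 1))) p q'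
          (fun i j => hgrade r (s - 1) _ (hp i) _ (hq' j)) k
        rwa [show r + (s - 1) = r + s - 1 by ring] at this
      have h2 : polyMul μ q p' k ∈ V (r + s - 1) := by
        have := polyMul_apply_mem μ (V (r - 1 + s)) q p'
          (fun i j => hgrade (r - 1) s _ (hq i) _ (hp' j)) k
        rwa [show r - 1 + s = r + s - 1 by ring] at this
      exact add_mem (Submodule.smul_mem _ _ h1) h2
    · show evalAt 0 (polyMul μ p p') ∈ I (r + s)
      rw [evalAt_polyMul]
      exact hgradeI r s _ hI _ hI'
    · show evalAt 1 (polyMul μ p p') ∈ F (r + s)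
      rw [evalAt_polyMul]
      exact hgradeF r s _ hF _ hF'
  · -- (ii) Leibniz
    rintro r s ⟨p, q⟩ ⟨p', q'⟩ ⟨hp, hq, -, -⟩ ⟨hp', hq', -, -⟩
    have hLr : ∀ u ∈ V r, ∀ v : A, d (μ u v) = μ (d u) v + ((-1 : ℚ) ^ r) • μ u (d v) :=
      hLeib r
    have hLr1 : ∀ u ∈ V (r - 1), ∀ v : A,
        d (μ u v) = μ (d u) v + ((-1 : ℚ) ^ (r - 1)) • μ u (d v) := hLeib (r - 1)
    have e1 := coeffMap_polyMul μ d r (V r) hLr p p' hp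
    have e2 := coeffMap_polyMul μ d r (V r) hLr p q' hp
    have e3 := coeffMap_polyMul μ d (r - 1) (V (r - 1)) hLr1 q p' hq
    have e4 := polyDeriv_polyMul μ p p'
    refine Prod.ext ?_ ?_
    · simpa [mulP, dPath, hsucc] using e1
    · show polyDeriv (polyMul μ p p') -
          coeffMap d (((-1 : ℚ) ^ r) • polyMul μ p q' + polyMul μ q p') =
        (((-1 : ℚ) ^ (r + 1)) • polyMul μ (coeffMap d p) q' +
          polyMul μ (polyDeriv p - coeffMap d q) p') +
        ((-1 : ℚ) ^ r) • (((-1 : ℚ) ^ r) • polyMul μ p (polyDeriv p' - coeffMap d q') +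
          polyMul μ q (coeffMap d p'))
      rw [map_add, map_smul, e2, e3, e4, polyMul_sub_left, polyMul_sub_right,
        hsucc, hpred]
      simp only [smul_add, smul_sub, smul_smul, hsq, one_smul, neg_smul]
      abel
  · -- (iii) associativity
    intro hassoc r s t w w' w'' _ _ _
    obtain ⟨p, q⟩ := w; obtain ⟨p', q'⟩ := w'; obtain ⟨p'', q''⟩ := w''
    refine Prod.ext ?_ ?_
    · exact polyMul_assoc μ hassoc p p' p''
    · show ((-1 : ℚ) ^ (r + s)) • polyMul μ (polyMul μ p p') q'' +
          polyMul μ (((-1 : ℚ) ^ r) • polyMul μ p q' + polyMul μ q p') p'' =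
        ((-1 : ℚ) ^ r) • polyMul μ p
            (((-1 : ℚ) ^ s) • polyMul μ p' q'' + polyMul μ q' p'') +
          polyMul μ q (polyMul μ p' p'')
      rw [hpow_add, polyMul_add_left, polyMul_smul_left, polyMul_add_right,
        polyMul_smul_right, polyMul_assoc μ hassoc, polyMul_assoc μ hassoc,
        polyMul_assoc μ hassoc]
      simp only [smul_add, smul_smul]
      abel
  · -- (iv) graded-commutativity
    intro hcomm r s w w' hw hw'
    obtain ⟨p, q⟩ := w; obtain ⟨p', q'⟩ := w'
    obtain ⟨hp, hq, -, -⟩ := hw; obtain ⟨hp', hq', -, -⟩ := hw'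
    have c1 : polyMul μ p p' = ((-1 : ℚ) ^ (r * s)) • polyMul μ p' p :=
      polyMul_comm μ _ (V r) (V s) (hcomm r s) p p' hp hp'
    have c2 : polyMul μ p q' = ((-1 : ℚ) ^ (r * (s - 1))) • polyMul μ q' p :=
      polyMul_comm μ _ (V r) (V (s - 1)) (hcomm r (s - 1)) p q' hp hq'
    have c3 : polyMul μ q p' = ((-1 : ℚ) ^ ((r - 1) * s)) • polyMul μ p' q :=
      polyMul_comm μ _ (V (r - 1)) (V s) (hcomm (r - 1) s) q p' hq hp'
    refine Prod.ext ?_ ?_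
    · exact c1
    · show ((-1 : ℚ) ^ r) • polyMul μ p q' + polyMul μ q p' =
        ((-1 : ℚ) ^ (r * s)) •
          (((-1 : ℚ) ^ s) • polyMul μ p' q + polyMul μ q' p)
      rw [c2, c3, smul_add, smul_smul, smul_smul]
      have k1 : (-1 : ℚ) ^ r * (-1 : ℚ) ^ (r * (s - 1)) = (-1 : ℚ) ^ (r * s) := by
        rw [← hpow_add, show r + r * (s - 1) = r * s by ring]
      have k2 : (-1 : ℚ) ^ ((r - 1) * s) = (-1 : ℚ) ^ (r * s) * (-1 : ℚ) ^ s := by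
        have h2s : (-1 : ℚ) ^ (2 * s) = 1 := by rw [zpow_mul]; norm_num
        rw [← hpow_add, show r * s + s = (r - 1) * s + 2 * s by ring, hpow_add, h2s, mul_one]
      rw [k1, k2]
      exact add_comm _ _
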